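/- (Proposition 3, existence and group-likeness of τ) Let R be a skew-invertible BMW type R-matrix on V⊗V with parameters (q,ν), with rank-one decomposition K^{kl}_{ij} = ḡ_{ij}·g^{kl}. Let A be a ℂ-bialgebra with coproduct Δ and counit ε, and let T ∈ Matrix ι ι A satisfy the RTT relations, Δ(T_i^j) = ∑_k T_i^k ⊗ T_k^j, and ε(T_i^j) = δ_i^j. Then there exists τ ∈ A such that ∑_{a,b} K^{kl}_{ab} T_i^a T_j^b = τ·K^{kl}_{ij} for all i,j,k,l ∈ ι (i.e., K₁₂T₁T₂ = τ·K₁₂), and this τ is group-like: Δ(τ) = τ ⊗ τ and ε(τ) = 1. -/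
import Mathlib


open scoped BigOperators

namespace BMWPaper

noncomputable section

/-- Operators on `V ⊗ V`, `V = ι → ℂ`, as matrices indexed by pairs. -/
abbrev Op (ι : Type*) := Matrix (ι × ι) (ι × ι) ℂ

/-- Operators on `V ⊗ V ⊗ V` as matrices indexed by triples. -/
abbrev Op3 (ι : Type*) := Matrix (ι × ι × ι) (ι × ι × ι) ℂ

variable {ι : Type*} [Fintype ι] [DecidableEq ι]

/-- `M₁₂ = M ⊗ I`. -/
def op12 (M : Op ι) : Op3 ι :=
  Matrix.of fun p q => M (p.1, p.2.1) (q.1, q.2.1) * (if p.2.2 = q.2.2 then 1 else 0)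

/-- `M₂₃ = I ⊗ M`. -/
def op23 (M : Op ι) : Op3 ι :=
  Matrix.of fun p q => (if p.1 = q.1 then 1 else 0) * M (p.2.1, p.2.2) (q.2.1, q.2.2)

/-- The permutation operator `P`, `P^{kl}_{ij} = δ^k_j δ^l_i`. -/
def Pmat (ι : Type*) [DecidableEq ι] : Op ι :=
  Matrix.of fun p q => if p.1 = q.2 ∧ p.2 = q.1 then (1 : ℂ) else 0

/-- Partial trace over the first factor: `(Tr₍₁₎M)^l_j = ∑_a M^{al}_{aj}`. -/
def tr1 (M : Op ι) : Matrix ι ι ℂ := Matrix.of fun l j => ∑ a, M (a, l) (a, j)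

/-- Partial trace over the second factor: `(Tr₍₂₎M)^k_i = ∑_a M^{ka}_{ia}`. -/
def tr2 (M : Op ι) : Matrix ι ι ℂ := Matrix.of fun k i => ∑ a, M (k, a) (i, a)

/-- Partial trace over the middle factor of an operator on `V ⊗ V ⊗ V`. -/
def tr2of3 (M : Op3 ι) : Op ι :=
  Matrix.of fun p q => ∑ a, M (p.1, a, p.2) (q.1, a, q.2)

/-- `U₁ = U ⊗ I` for an `N×N` matrix `U`. -/
def u1 (U : Matrix ι ι ℂ) : Op ι :=
  Matrix.of fun p q => U p.1 q.1 * (if p.2 = q.2 then 1 else 0)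

/-- `U₂ = I ⊗ U` for an `N×N` matrix `U`. -/
def u2 (U : Matrix ι ι ℂ) : Op ι :=
  Matrix.of fun p q => (if p.1 = q.1 then 1 else 0) * U p.2 q.2

/-- `Ψ` is a skew inverse of `R`: `Tr₍₂₎(R₁₂Ψ₂₃) = P₁₃ = Tr₍₂₎(Ψ₁₂R₂₃)`. -/
def SkewInverse (R Ψ : Op ι) : Prop :=
  tr2of3 (op12 R * op23 Ψ) = Pmat ι ∧ tr2of3 (op12 Ψ * op23 R) = Pmat ι

/-- The Yang–Baxter equation `R₁₂R₂₃R₁₂ = R₂₃R₁₂R₂₃`. -/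
def YangBaxter (R : Op ι) : Prop :=
  op12 R * op23 R * op12 R = op23 R * op12 R * op23 R

/-- `K := λ⁻¹ν⁻¹(qI - R)(q⁻¹I + R)` with `λ := q - q⁻¹`. -/
def Kmat (q ν : ℂ) (R : Op ι) : Op ι :=
  ((q - q⁻¹)⁻¹ * ν⁻¹) • ((q • (1 : Op ι) - R) * (q⁻¹ • (1 : Op ι) + R))

/-- `μ := λ⁻¹ ν⁻¹ (q - ν)(q⁻¹ + ν)`. -/
def muBMW (q ν : ℂ) : ℂ := ((q - q⁻¹)⁻¹ * ν⁻¹) * ((q - ν) * (q⁻¹ + ν))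

/-- `R` is a BMW type R-matrix with parameters `(q, ν)`: `R` is invertible, satisfies
the Yang–Baxter equation, and with `K := Kmat q ν R` the relations
`RK = KR = νK`, `K₂₃R₁₂K₂₃ = ν⁻¹K₂₃` and `K₂₃R₁₂⁻¹K₂₃ = νK₂₃` hold. -/
def BMWType (q ν : ℂ) (R : Op ι) : Prop :=
  IsUnit R ∧ YangBaxter R ∧
  R * Kmat q ν R = ν • Kmat q ν R ∧
  Kmat q ν R * R = ν • Kmat q ν R ∧
  op23 (Kmat q ν R) * op12 R * op23 (Kmat q ν R) = ν⁻¹ • op23 (Kmat q ν R) ∧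
  op23 (Kmat q ν R) * op12 R⁻¹ * op23 (Kmat q ν R) = ν • op23 (Kmat q ν R)
/-- The matrix `N` with `N^{kl}_{ij} = T_i^k T_j^l`. -/
def Nmat {ι : Type*} {A : Type*} [Ring A] (T : Matrix ι ι A) :
    Matrix (ι × ι) (ι × ι) A :=
  Matrix.of fun p r => T r.1 p.1 * T r.2 p.2

lemma mulN_apply {ι : Type*} [Fintype ι] {A : Type*} [Ring A] [Algebra ℂ A]
    (M : Op ι) (T : Matrix ι ι A) (k l i j : ι) :
    (M.map (algebraMap ℂ A) * Nmat T) (k, l) (i, j)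
      = ∑ a, ∑ b, M (k, l) (a, b) • (T i a * T j b) := by
  rw [Matrix.mul_apply, Fintype.sum_prod_type]
  simp [Nmat, Matrix.map_apply, Algebra.smul_def, mul_assoc]

lemma Nmul_apply {ι : Type*} [Fintype ι] {A : Type*} [Ring A] [Algebra ℂ A]
    (M : Op ι) (T : Matrix ι ι A) (k l i j : ι) :
    (Nmat T * M.map (algebraMap ℂ A)) (k, l) (i, j)
      = ∑ a, ∑ b, M (a, b) (i, j) • (T a k * T b l) := by
  rw [Matrix.mul_apply, Fintype.sum_prod_type]
  simp [Nmat, Matrix.map_apply, Algebra.smul_def, Algebra.commutes]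

lemma sum4_comm {M : Type*} [AddCommMonoid M] {ι : Type*} [Fintype ι]
    (F : ι → ι → ι → ι → M) :
    ∑ a, ∑ b, ∑ c, ∑ d, F a b c d = ∑ c, ∑ d, ∑ a, ∑ b, F a b c d := by
  have h1 : ∑ a, ∑ b, ∑ c, ∑ d, F a b c d = ∑ a, ∑ c, ∑ b, ∑ d, F a b c d :=
    Finset.sum_congr rfl fun a _ => Finset.sum_comm
  have h2 : ∑ a, ∑ c, ∑ b, ∑ d, F a b c d = ∑ c, ∑ a, ∑ b, ∑ d, F a b c d :=
    Finset.sum_comm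
  have h3 : ∑ c, ∑ a, ∑ b, ∑ d, F a b c d = ∑ c, ∑ a, ∑ d, ∑ b, F a b c d :=
    Finset.sum_congr rfl fun c _ => Finset.sum_congr rfl fun a _ => Finset.sum_comm
  have h4 : ∑ c, ∑ a, ∑ d, ∑ b, F a b c d = ∑ c, ∑ d, ∑ a, ∑ b, F a b c d :=
    Finset.sum_congr rfl fun c _ => Finset.sum_comm
  rw [h1, h2, h3, h4]

open scoped TensorProduct in
/-- Proposition 3, existence and group-likeness of τ: if `T` satisfies
the RTT relations in a ℂ-bialgebra and is comultiplicative, then there is `τ` with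
`K₁₂T₁T₂ = τ K₁₂`, and `τ` is group-like. -/
theorem stmt15 {ι : Type*} [Fintype ι] [DecidableEq ι] [Nonempty ι]
    (q ν : ℂ) (hq0 : q ≠ 0) (hq1 : q ≠ 1) (hqm1 : q ≠ -1)
    (hν0 : ν ≠ 0) (hνq : ν ≠ q) (hνq' : ν ≠ -q⁻¹)
    (R Ψ : Op ι) (hBMW : BMWType q ν R) (hskew : SkewInverse R Ψ)
    (gbar g : ι → ι → ℂ)
    (hdec : ∀ i j k l, Kmat q ν R (k, l) (i, j) = gbar i j * g k l)
    (A : Type*) [Ring A] [Bialgebra ℂ A]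
    (T : Matrix ι ι A)
    (hRTT : ∀ i j k l, ∑ a, ∑ b, R (k, l) (a, b) • (T i a * T j b) =
      ∑ a, ∑ b, R (a, b) (i, j) • (T a k * T b l))
    (hcomul : ∀ i j, Coalgebra.comul (R := ℂ) (T i j) = ∑ k, T i k ⊗ₜ[ℂ] T k j)
    (hcounit : ∀ i j, Coalgebra.counit (R := ℂ) (T i j) = if i = j then (1 : ℂ) else 0) :
    ∃ τ : A,
      (∀ i j k l, ∑ a, ∑ b, Kmat q ν R (k, l) (a, b) • (T i a * T j b) =
        Kmat q ν R (k, l) (i, j) • τ) ∧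
      Coalgebra.comul (R := ℂ) τ = τ ⊗ₜ[ℂ] τ ∧
      Coalgebra.counit (R := ℂ) τ = 1 := by
  classical
  set K : Op ι := Kmat q ν R with hKdef
  by_cases hKz : ∀ p r : ι × ι, K p r = 0
  · refine ⟨1, fun i j k l => by simp [hKz], ?_, by simp⟩
    rw [Bialgebra.comul_one, Algebra.TensorProduct.one_def]
  · -- the algebra map on matrices
    push_neg at hKz
    obtain ⟨⟨k₀, l₀⟩, ⟨i₀, j₀⟩, hne⟩ := hKz
    rw [hdec] at hne
    have hg0 : gbar i₀ j₀ ≠ 0 := left_ne_zero_of_mul hne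
    have hg1 : g k₀ l₀ ≠ 0 := right_ne_zero_of_mul hne
    set φ : Op ι →ₐ[ℂ] Matrix (ι × ι) (ι × ι) A := (Algebra.ofId ℂ A).mapMatrix with hφdef
    have hφmap : ∀ M : Op ι, φ M = M.map (algebraMap ℂ A) := fun M => rfl
    have hRN : φ R * Nmat T = Nmat T * φ R := by
      ext ⟨k, l⟩ ⟨i, j⟩
      rw [hφmap, mulN_apply, Nmul_apply]
      exact hRTT i j k l
    have hCR : Commute (φ R) (Nmat T) := hRN
    have hKN : φ K * Nmat T = Nmat T * φ K := by
      have h1 : Commute (φ (q • (1 : Op ι) - R)) (Nmat T) := by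
        rw [map_sub, map_smul, map_one]
        exact (((Commute.one_left (Nmat T)).smul_left q)).sub_left hCR
      have h2 : Commute (φ (q⁻¹ • (1 : Op ι) + R)) (Nmat T) := by
        rw [map_add, map_smul, map_one]
        exact (((Commute.one_left (Nmat T)).smul_left q⁻¹)).add_left hCR
      have h3 : Commute (φ K) (Nmat T) := by
        rw [hKdef]
        unfold Kmat
        rw [map_smul, map_mul]
        exact (h1.mul_left h2).smul_left _
      exact h3
    have hEnt : ∀ i j k l, ∑ a, ∑ b, K (k, l) (a, b) • (T i a * T j b)
        = ∑ a, ∑ b, K (a, b) (i, j) • (T a k * T b l) := by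
      intro i j k l
      have h := Matrix.ext_iff.mpr hKN (k, l) (i, j)
      rwa [hφmap, mulN_apply, Nmul_apply] at h
    set S : ι → ι → A := fun i j => ∑ a, ∑ b, gbar a b • (T i a * T j b) with hSdef
    set S' : ι → ι → A := fun k l => ∑ a, ∑ b, g a b • (T a k * T b l) with hS'def
    have hKey : ∀ i j k l, g k l • S i j = gbar i j • S' k l := by
      intro i j k l
      have h := hEnt i j k l
      simp only [hdec] at h
      calc g k l • S i j = ∑ a, ∑ b, (gbar a b * g k l) • (T i a * T j b) := by
            simp [hSdef, Finset.smul_sum, smul_smul, mul_comm]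
        _ = ∑ a, ∑ b, (gbar i j * g a b) • (T a k * T b l) := h
        _ = gbar i j • S' k l := by
            simp [hS'def, Finset.smul_sum, smul_smul]
    set τ : A := (gbar i₀ j₀)⁻¹ • S i₀ j₀ with hτdef
    have hS'k : S' k₀ l₀ = g k₀ l₀ • τ := by
      have h := hKey i₀ j₀ k₀ l₀
      rw [hτdef, smul_comm, h, inv_smul_smul₀ hg0]
    have hS : ∀ i j, S i j = gbar i j • τ := by
      intro i j
      have h := hKey i j k₀ l₀
      rw [hS'k, smul_comm (gbar i j)] at h
      have h2 := congrArg (fun x => (g k₀ l₀)⁻¹ • x) h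
      simpa [inv_smul_smul₀ hg1] using h2
    refine ⟨τ, ?_, ?_, ?_⟩
    · intro i j k l
      calc ∑ a, ∑ b, K (k, l) (a, b) • (T i a * T j b)
          = ∑ a, ∑ b, (gbar a b * g k l) • (T i a * T j b) := by
            simp only [hdec]
        _ = g k l • S i j := by simp [hSdef, Finset.smul_sum, smul_smul, mul_comm]
        _ = (gbar i j * g k l) • τ := by rw [hS i j, smul_smul, mul_comm]
        _ = K (k, l) (i, j) • τ := by rw [hdec]
    · -- comultiplicativity
      have hcS : Coalgebra.comul (R := ℂ) (S i₀ j₀) = S i₀ j₀ ⊗ₜ[ℂ] τ := by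
        calc Coalgebra.comul (R := ℂ) (S i₀ j₀)
            = ∑ a, ∑ b, gbar a b •
                (Coalgebra.comul (R := ℂ) (T i₀ a) * Coalgebra.comul (R := ℂ) (T j₀ b)) := by
              simp only [hSdef, map_sum, map_smul, Bialgebra.comul_mul]
          _ = ∑ a, ∑ b, ∑ c, ∑ d,
                gbar a b • ((T i₀ c * T j₀ d) ⊗ₜ[ℂ] (T c a * T d b)) := by
              refine Finset.sum_congr rfl fun a _ => Finset.sum_congr rfl fun b _ => ?_
              rw [hcomul, hcomul, Finset.sum_mul_sum]
              simp only [Finset.smul_sum, Algebra.TensorProduct.tmul_mul_tmul]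
          _ = ∑ c, ∑ d, ∑ a, ∑ b,
                gbar a b • ((T i₀ c * T j₀ d) ⊗ₜ[ℂ] (T c a * T d b)) :=
              sum4_comm _
          _ = ∑ c, ∑ d, (T i₀ c * T j₀ d) ⊗ₜ[ℂ] S c d := by
              refine Finset.sum_congr rfl fun c _ => Finset.sum_congr rfl fun d _ => ?_
              simp only [hSdef, TensorProduct.tmul_sum, TensorProduct.tmul_smul]
          _ = ∑ c, ∑ d, gbar c d • ((T i₀ c * T j₀ d) ⊗ₜ[ℂ] τ) := by
              refine Finset.sum_congr rfl fun c _ => Finset.sum_congr rfl fun d _ => ?_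
              rw [hS c d, TensorProduct.tmul_smul]
          _ = S i₀ j₀ ⊗ₜ[ℂ] τ := by
              simp only [hSdef, TensorProduct.sum_tmul, TensorProduct.smul_tmul']
      calc Coalgebra.comul (R := ℂ) τ
          = (gbar i₀ j₀)⁻¹ • Coalgebra.comul (R := ℂ) (S i₀ j₀) := by
            rw [hτdef, map_smul]
        _ = (gbar i₀ j₀)⁻¹ • ((gbar i₀ j₀ • τ) ⊗ₜ[ℂ] τ) := by rw [hcS, hS i₀ j₀]
        _ = τ ⊗ₜ[ℂ] τ := by
            rw [← TensorProduct.smul_tmul', smul_smul, inv_mul_cancel₀ hg0, one_smul]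
    · -- counit
      have hcS : Coalgebra.counit (R := ℂ) (S i₀ j₀) = gbar i₀ j₀ := by
        simp only [hSdef, map_sum, map_smul, Bialgebra.counit_mul, hcounit]
        simp
      rw [hτdef, map_smul, hcS, smul_eq_mul, inv_mul_cancel₀ hg0]

end

end BMWPaper
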